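/- Let q ∈ (0,1) and let H = ℓ²(ℕ₀) with standard orthonormal basis (e_k)_{k≥0}. There exist bounded linear operators α, γ on H such that α e_0 = 0, α e_k = √(1 − q^{2k}) e_{k−1} for k ≥ 1, γ e_l = q^l e_l for l ≥ 0, γ is self-adjoint, and the SU_q(2) relations hold: αγ = qγα, αγ* = qγ*α, γ*γ = γγ*, α*α + γ*γ = 1, αα* + q²γ*γ = 1. -/

import Mathlib

open scoped ComplexConjugate ENNReal NNReal

namespace SUq2Aux

noncomputable section

abbrev H := lp (fun _ : ℕ => ℂ) 2

lemma sq_summable (x : H) : Summable fun n => ‖x n‖ ^ ((2 : ℝ≥0∞).toReal) :=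
  (lp.memℓp x).summable (by simp)

/-- The generic "weighted composition" operator `x ↦ fun n => c n * x (s n)`. -/
def mk (c : ℕ → ℂ) (s : ℕ → ℕ)
    (hmem : ∀ x : H, Memℓp (fun n => c n * x (s n)) 2)
    (hbd : ∀ x : H, ∑' n, ‖c n * x (s n)‖ ^ ((2 : ℝ≥0∞).toReal)
      ≤ ∑' n, ‖x n‖ ^ ((2 : ℝ≥0∞).toReal)) : H →L[ℂ] H :=
  LinearMap.mkContinuous
    { toFun := fun x => (⟨fun n => c n * x (s n), hmem x⟩ : H)
      map_add' := fun x y => lp.ext (funext fun n => by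
        simp only [lp.coeFn_add, Pi.add_apply, mul_add])
      map_smul' := fun a x => lp.ext (funext fun n => by
        simp only [lp.coeFn_smul, Pi.smul_apply, smul_eq_mul, RingHom.id_apply]
        show c n * (a * x (s n)) = a * (c n * x (s n))
        ring) }
    1 (fun x => by
      rw [one_mul]
      refine lp.norm_le_of_tsum_le (by simp) (norm_nonneg x) ?_
      rw [lp.norm_rpow_eq_tsum (by simp) x]
      exact hbd x)

@[simp] lemma mk_apply (c : ℕ → ℂ) (s : ℕ → ℕ) (hmem) (hbd) (x : H) (n : ℕ) :
    (mk c s hmem hbd x : ∀ _ : ℕ, ℂ) n = c n * x (s n) := rfl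

lemma term_le (c : ℕ → ℂ) (hc : ∀ n, ‖c n‖ ≤ 1) (x : H) (s : ℕ → ℕ) (n : ℕ) :
    ‖c n * x (s n)‖ ^ ((2 : ℝ≥0∞).toReal) ≤ ‖x (s n)‖ ^ ((2 : ℝ≥0∞).toReal) := by
  apply Real.rpow_le_rpow (norm_nonneg _) _ (by simp)
  rw [norm_mul]
  exact mul_le_of_le_one_left (norm_nonneg _) (hc n)

lemma summable_of_inj (c : ℕ → ℂ) (s : ℕ → ℕ) (hc : ∀ n, ‖c n‖ ≤ 1)
    (hs : Function.Injective s) (x : H) :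
    Summable fun n => ‖c n * x (s n)‖ ^ ((2 : ℝ≥0∞).toReal) := by
  have hgs : Summable fun n => ‖x (s n)‖ ^ ((2 : ℝ≥0∞).toReal) :=
    (sq_summable x).comp_injective hs
  exact hgs.of_nonneg_of_le (fun n => by positivity) (fun n => term_le c hc x s n)

lemma memℓp_of_inj (c : ℕ → ℂ) (s : ℕ → ℕ) (hc : ∀ n, ‖c n‖ ≤ 1)
    (hs : Function.Injective s) (x : H) :
    Memℓp (fun n => c n * x (s n)) 2 :=
  memℓp_gen (summable_of_inj c s hc hs x)

lemma tsum_le_of_inj (c : ℕ → ℂ) (s : ℕ → ℕ) (hc : ∀ n, ‖c n‖ ≤ 1)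
    (hs : Function.Injective s) (x : H) :
    ∑' n, ‖c n * x (s n)‖ ^ ((2 : ℝ≥0∞).toReal)
      ≤ ∑' n, ‖x n‖ ^ ((2 : ℝ≥0∞).toReal) :=
  Summable.tsum_le_tsum_of_inj s hs (fun m _ => by positivity) (fun n => term_le c hc x s n)
    (summable_of_inj c s hc hs x) (sq_summable x)

-- the "pred" case, assuming `c 0 = 0`
lemma summable_pred (c : ℕ → ℂ) (hc : ∀ n, ‖c n‖ ≤ 1) (hc0 : c 0 = 0) (x : H) :
    Summable fun n => ‖c n * x (n - 1)‖ ^ ((2 : ℝ≥0∞).toReal) := by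
  rw [← Function.Injective.summable_iff Nat.succ_injective
    (f := fun n => ‖c n * x (n - 1)‖ ^ ((2 : ℝ≥0∞).toReal)) (fun n hn => by
      rcases n with _ | m
      · simp [hc0]
      · exact absurd ⟨m, rfl⟩ hn)]
  refine (sq_summable x).of_nonneg_of_le
    (fun n => by simp only [Function.comp_apply]; positivity) (fun n => ?_)
  simp only [Function.comp_apply]
  simpa using term_le c hc x (fun m => m - 1) (n + 1)

lemma memℓp_pred (c : ℕ → ℂ) (hc : ∀ n, ‖c n‖ ≤ 1) (hc0 : c 0 = 0) (x : H) :
    Memℓp (fun n => c n * x (n - 1)) 2 :=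
  memℓp_gen (summable_pred c hc hc0 x)

lemma tsum_le_pred (c : ℕ → ℂ) (hc : ∀ n, ‖c n‖ ≤ 1) (hc0 : c 0 = 0) (x : H) :
    ∑' n, ‖c n * x (n - 1)‖ ^ ((2 : ℝ≥0∞).toReal)
      ≤ ∑' n, ‖x n‖ ^ ((2 : ℝ≥0∞).toReal) := by
  have hsupp : Function.support
      (fun n => ‖c n * x (n - 1)‖ ^ ((2 : ℝ≥0∞).toReal)) ⊆ Set.range Nat.succ := by
    intro n hn
    rcases n with _ | m
    · exact absurd (by simp [hc0]) hn
    · exact ⟨m, rfl⟩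
  rw [← Function.Injective.tsum_eq Nat.succ_injective hsupp]
  refine Summable.tsum_le_tsum (fun m => ?_) (summable_pred c hc hc0 x |>.comp_injective Nat.succ_injective)
    (sq_summable x)
  simpa using term_le c hc x (fun m => m - 1) (m + 1)


/-! ### The specific operators -/

def w (q : ℝ) (k : ℕ) : ℝ := Real.sqrt (1 - q ^ (2 * k))

lemma w_zero (q : ℝ) : w q 0 = 0 := by simp [w]

lemma w_norm_le {q : ℝ} (hq0 : 0 < q) (hq1 : q < 1) (k : ℕ) :
    ‖((w q k : ℝ) : ℂ)‖ ≤ 1 := by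
  rw [Complex.norm_real, Real.norm_eq_abs, w, abs_of_nonneg (Real.sqrt_nonneg _)]
  exact Real.sqrt_le_one.mpr (sub_le_self _ (pow_nonneg hq0.le _))

lemma w_mul_self {q : ℝ} (hq0 : 0 < q) (hq1 : q < 1) (k : ℕ) :
    ((w q k : ℝ) : ℂ) * ((w q k : ℝ) : ℂ) = 1 - (q : ℂ) ^ (2 * k) := by
  rw [← Complex.ofReal_mul, ← sq, w, Real.sq_sqrt (by
    have : q ^ (2 * k) ≤ 1 := pow_le_one₀ hq0.le hq1.le
    linarith)]
  push_cast
  ring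

lemma q_norm_le {q : ℝ} (hq0 : 0 < q) (hq1 : q < 1) (n : ℕ) :
    ‖((q : ℂ) ^ n)‖ ≤ 1 := by
  rw [norm_pow, Complex.norm_real, Real.norm_eq_abs, abs_of_pos hq0]
  exact pow_le_one₀ hq0.le hq1.le

variable {q : ℝ} (hq0 : 0 < q) (hq1 : q < 1)

def alphaOp : H →L[ℂ] H :=
  mk (fun n => ((w q (n + 1) : ℝ) : ℂ)) (fun n => n + 1)
    (memℓp_of_inj _ _ (fun n => w_norm_le hq0 hq1 _) (fun a b h => by omega))
    (tsum_le_of_inj _ _ (fun n => w_norm_le hq0 hq1 _) (fun a b h => by omega))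

def gammaOp : H →L[ℂ] H :=
  mk (fun n => (q : ℂ) ^ n) id
    (memℓp_of_inj _ _ (fun n => q_norm_le hq0 hq1 _) (fun a b h => h))
    (tsum_le_of_inj _ _ (fun n => q_norm_le hq0 hq1 _) (fun a b h => h))

def betaOp : H →L[ℂ] H :=
  mk (fun n => ((w q n : ℝ) : ℂ)) (fun n => n - 1)
    (memℓp_pred _ (fun n => w_norm_le hq0 hq1 _) (by simp [w_zero]))
    (tsum_le_pred _ (fun n => w_norm_le hq0 hq1 _) (by simp [w_zero]))

lemma alphaOp_apply (x : H) (n : ℕ) :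
    (alphaOp hq0 hq1 x : ∀ _ : ℕ, ℂ) n
      = ((w q (n + 1) : ℝ) : ℂ) * (x : ∀ _ : ℕ, ℂ) (n + 1) := rfl

lemma gammaOp_apply (x : H) (n : ℕ) :
    (gammaOp hq0 hq1 x : ∀ _ : ℕ, ℂ) n = (q : ℂ) ^ n * (x : ∀ _ : ℕ, ℂ) n := rfl

lemma betaOp_apply (x : H) (n : ℕ) :
    (betaOp hq0 hq1 x : ∀ _ : ℕ, ℂ) n
      = ((w q n : ℝ) : ℂ) * (x : ∀ _ : ℕ, ℂ) (n - 1) := rfl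

lemma betaOp_eq_adjoint :
    betaOp hq0 hq1 = ContinuousLinearMap.adjoint (alphaOp hq0 hq1) := by
  rw [ContinuousLinearMap.eq_adjoint_iff]
  intro x y
  rw [lp.inner_eq_tsum, lp.inner_eq_tsum]
  have hsupp : Function.support
      (fun n => (inner ℂ ((betaOp hq0 hq1 x) n) (y n) : ℂ)) ⊆ Set.range Nat.succ := by
    intro n hn
    rcases n with _ | m
    · refine absurd ?_ hn
      show (inner ℂ ((betaOp hq0 hq1 x) 0) (y 0) : ℂ) = 0
      have : (betaOp hq0 hq1 x) 0 = 0 := by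
        show ((w q 0 : ℝ) : ℂ) * x (0 - 1) = 0
        simp [w_zero]
      rw [this, inner_zero_left]
    · exact ⟨m, rfl⟩
  rw [← Function.Injective.tsum_eq Nat.succ_injective hsupp]
  congr 1
  funext m
  show (inner ℂ ((betaOp hq0 hq1 x) (m + 1)) (y (m + 1)) : ℂ)
      = inner ℂ (x m) ((alphaOp hq0 hq1 y) m)
  show (inner ℂ (((w q (m + 1) : ℝ) : ℂ) * x (m + 1 - 1)) (y (m + 1)) : ℂ)
      = inner ℂ (x m) (((w q (m + 1) : ℝ) : ℂ) * y (m + 1))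
  simp only [Nat.add_sub_cancel, RCLike.inner_apply, map_mul, Complex.conj_ofReal]
  ring

lemma star_alphaOp : star (alphaOp hq0 hq1) = betaOp hq0 hq1 := by
  rw [ContinuousLinearMap.star_eq_adjoint, ← betaOp_eq_adjoint hq0 hq1]

lemma gammaOp_selfAdjoint : IsSelfAdjoint (gammaOp hq0 hq1) := by
  rw [IsSelfAdjoint, ContinuousLinearMap.star_eq_adjoint]
  symm
  rw [ContinuousLinearMap.eq_adjoint_iff]
  intro x y
  rw [lp.inner_eq_tsum, lp.inner_eq_tsum]
  congr 1
  funext n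
  show (inner ℂ ((q : ℂ) ^ n * x n) (y n) : ℂ) = inner ℂ (x n) ((q : ℂ) ^ n * y n)
  simp only [RCLike.inner_apply, map_mul, map_pow, Complex.conj_ofReal]
  ring

end

end SUq2Aux

open SUq2Aux

/-- On `ℓ²(ℕ₀)` there exist bounded operators `α, γ` with `α e₀ = 0`,
`α e_k = √(1 − q^{2k}) e_{k−1}` (`k ≥ 1`), `γ e_l = q^l e_l`, `γ` self-adjoint,
satisfying the `SU_q(2)` relations. -/
theorem exists_suq2_operators_on_l2 (q : ℝ) (hq0 : 0 < q) (hq1 : q < 1) :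
    ∃ α γ : lp (fun _ : ℕ => ℂ) 2 →L[ℂ] lp (fun _ : ℕ => ℂ) 2,
      α (lp.single 2 0 (1 : ℂ)) = 0 ∧
      (∀ k : ℕ, 1 ≤ k →
        α (lp.single 2 k (1 : ℂ)) =
          ((Real.sqrt (1 - q ^ (2 * k)) : ℝ) : ℂ) • lp.single 2 (k - 1) (1 : ℂ)) ∧
      (∀ l : ℕ, γ (lp.single 2 l (1 : ℂ)) = ((q : ℂ) ^ l) • lp.single 2 l (1 : ℂ)) ∧
      IsSelfAdjoint γ ∧
      α * γ = (q : ℂ) • (γ * α) ∧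
      α * star γ = (q : ℂ) • (star γ * α) ∧
      star γ * γ = γ * star γ ∧
      star α * α + star γ * γ = 1 ∧
      α * star α + ((q : ℂ) ^ 2) • (star γ * γ) = 1 := by
  refine ⟨alphaOp hq0 hq1, gammaOp hq0 hq1, ?_, ?_, ?_, gammaOp_selfAdjoint hq0 hq1,
    ?_, ?_, ?_, ?_, ?_⟩
  · -- α e₀ = 0
    apply lp.ext
    funext n
    rw [alphaOp_apply, lp.single_apply_ne (E := fun _ : ℕ => ℂ) 2 0 (1 : ℂ) (by omega)]
    simp
  · -- α e_k
    intro k hk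
    apply lp.ext
    funext n
    rw [alphaOp_apply, lp.coeFn_smul, Pi.smul_apply, smul_eq_mul]
    by_cases h : n + 1 = k
    · have hn : n = k - 1 := by omega
      subst hn
      rw [h, lp.single_apply_self, lp.single_apply_self, ← w]
    · rw [lp.single_apply_ne (E := fun _ : ℕ => ℂ) 2 k (1 : ℂ) h, lp.single_apply_ne (E := fun _ : ℕ => ℂ) 2 (k - 1) (1 : ℂ) (by omega)]
      ring
  · -- γ e_l
    intro l
    apply lp.ext
    funext n
    rw [gammaOp_apply, lp.coeFn_smul, Pi.smul_apply, smul_eq_mul]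
    by_cases h : n = l
    · subst h; rfl
    · rw [lp.single_apply_ne (E := fun _ : ℕ => ℂ) 2 l (1 : ℂ) h]
      ring
  · -- αγ = q γα
    ext x n
    simp only [ContinuousLinearMap.mul_apply, ContinuousLinearMap.smul_apply,
      lp.coeFn_smul, Pi.smul_apply, smul_eq_mul, alphaOp_apply, gammaOp_apply, pow_succ]
    ring
  · -- α γ* = q γ* α
    rw [(gammaOp_selfAdjoint hq0 hq1).star_eq]
    ext x n
    simp only [ContinuousLinearMap.mul_apply, ContinuousLinearMap.smul_apply,
      lp.coeFn_smul, Pi.smul_apply, smul_eq_mul, alphaOp_apply, gammaOp_apply, pow_succ]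
    ring
  · -- γ*γ = γγ*
    rw [(gammaOp_selfAdjoint hq0 hq1).star_eq]
  · -- α*α + γ*γ = 1
    rw [star_alphaOp hq0 hq1, (gammaOp_selfAdjoint hq0 hq1).star_eq]
    ext x n
    simp only [ContinuousLinearMap.mul_apply, ContinuousLinearMap.add_apply,
      ContinuousLinearMap.one_apply, lp.coeFn_add, Pi.add_apply,
      betaOp_apply, alphaOp_apply, gammaOp_apply]
    rcases n with _ | m
    · simp [w_zero]
    · rw [show m + 1 - 1 + 1 = m + 1 from rfl]
      have h2 : (q : ℂ) ^ (m + 1) * ((q : ℂ) ^ (m + 1)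
            * (x : ∀ _ : ℕ, ℂ) (m + 1))
          = (q : ℂ) ^ (2 * (m + 1)) * (x : ∀ _ : ℕ, ℂ) (m + 1) := by
        rw [show 2 * (m + 1) = (m + 1) + (m + 1) from by omega, pow_add]
        ring
      rw [← mul_assoc, w_mul_self hq0 hq1, h2]
      ring
  · -- αα* + q² γ*γ = 1
    rw [star_alphaOp hq0 hq1, (gammaOp_selfAdjoint hq0 hq1).star_eq]
    ext x n
    simp only [ContinuousLinearMap.mul_apply, ContinuousLinearMap.add_apply,
      ContinuousLinearMap.one_apply, ContinuousLinearMap.smul_apply, lp.coeFn_add,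
      Pi.add_apply, lp.coeFn_smul, Pi.smul_apply, smul_eq_mul,
      betaOp_apply, alphaOp_apply, gammaOp_apply, Nat.add_sub_cancel]
    rw [← mul_assoc, w_mul_self hq0 hq1]
    have h2 : (q : ℂ) ^ 2 * ((q : ℂ) ^ n * ((q : ℂ) ^ n * (x : ∀ _ : ℕ, ℂ) n))
        = (q : ℂ) ^ (2 * (n + 1)) * (x : ∀ _ : ℕ, ℂ) n := by
      rw [show 2 * (n + 1) = 2 + n + n from by omega, pow_add, pow_add]
      ring
    rw [h2]
    ring
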